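/- arXiv:1702.08169 — 2 statements merged into one kernel-verified Lean document; each statement's English description precedes it below -/
import Mathlib

section
/- Let M and C be real symmetric positive definite d×d matrices with M ⪯ C ⪯ M + 2μI for some μ ≥ 0, and let λ_d(M) denote the smallest eigenvalue of M. Then the smallest eigenvalue of C^{-1/2} M C^{-1/2} is at least λ_d(M)/(λ_d(M) + 2μ). -/
open Matrix
open scoped Pointwise

open scoped ComplexOrder in
/-- The positive semidefinite square root of a positive semidefinite matrix
(the definition of `Matrix.PosSemidef.sqrt` in the older Mathlib). -/
noncomputable def Matrix.PosSemidef.sqrt {n : Type*} [Fintype n] [DecidableEq n] {𝕜 : Type*}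
    [RCLike 𝕜] {A : Matrix n n 𝕜} (hA : A.PosSemidef) : Matrix n n 𝕜 :=
  hA.isHermitian.eigenvectorUnitary.1 * diagonal ((↑) ∘ (√·) ∘ hA.isHermitian.eigenvalues) *
    (star hA.isHermitian.eigenvectorUnitary : Matrix n n 𝕜)

lemma aux_sqrt_psd {n : Type*} [Fintype n] [DecidableEq n] {A : Matrix n n ℝ}
    (hA : A.PosSemidef) : hA.sqrt.PosSemidef := by
  have hD : (diagonal (RCLike.ofReal ∘ (√·) ∘ hA.isHermitian.eigenvalues) : Matrix n n ℝ).PosSemidef :=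
    posSemidef_diagonal_iff.mpr fun i => by simp [Real.sqrt_nonneg]
  have := hD.mul_mul_conjTranspose_same (hA.isHermitian.eigenvectorUnitary : Matrix n n ℝ)
  unfold Matrix.PosSemidef.sqrt
  rwa [star_eq_conjTranspose]

lemma aux_sqrt_mul_self {n : Type*} [Fintype n] [DecidableEq n] {A : Matrix n n ℝ}
    (hA : A.PosSemidef) : hA.sqrt * hA.sqrt = A := by
  unfold Matrix.PosSemidef.sqrt
  conv_rhs => rw [hA.isHermitian.spectral_theorem, Unitary.conjStarAlgAut_apply]
  have hU : (star hA.isHermitian.eigenvectorUnitary : Matrix n n ℝ) *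
      (hA.isHermitian.eigenvectorUnitary : Matrix n n ℝ) = 1 := Unitary.coe_star_mul_self _
  have hDD : (diagonal (RCLike.ofReal ∘ (√·) ∘ hA.isHermitian.eigenvalues) : Matrix n n ℝ) *
      diagonal (RCLike.ofReal ∘ (√·) ∘ hA.isHermitian.eigenvalues) =
      diagonal (RCLike.ofReal ∘ hA.isHermitian.eigenvalues) := by
    rw [diagonal_mul_diagonal]
    congr 1; funext i
    simp [Real.mul_self_sqrt (hA.eigenvalues_nonneg i)]
  rw [← hDD]
  simp only [Matrix.mul_assoc]
  rw [← Matrix.mul_assoc (star _ : Matrix n n ℝ) _ _, hU, Matrix.one_mul]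

lemma aux_smul_psd {n : Type*} [Fintype n] {A : Matrix n n ℝ} (hA : A.PosSemidef)
    {c : ℝ} (hc : 0 ≤ c) : (c • A).PosSemidef := by
  exact hA.smul hc

lemma aux_spectrum_nonneg {n : Type*} [Fintype n] [DecidableEq n] {A : Matrix n n ℝ}
    (hA : A.PosSemidef) : ∀ x ∈ spectrum ℝ A, 0 ≤ x := by
  intro x hx
  rw [Matrix.IsHermitian.spectrum_real_eq_range_eigenvalues hA.1] at hx
  obtain ⟨i, rfl⟩ := hx
  exact hA.eigenvalues_nonneg i

/-- If `M ⪯ C ⪯ M + 2μI` with `M`, `C` positive definite and `μ ≥ 0`, then the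
smallest eigenvalue of `C^{-1/2} M C^{-1/2}` is at least
`λ_min(M) / (λ_min(M) + 2μ)`. -/
theorem stmt7 {d : ℕ} (M C : Matrix (Fin d) (Fin d) ℝ) (μ : ℝ) (hμ : 0 ≤ μ)
    (hM : M.PosDef) (hC : C.PosDef)
    (h1 : (C - M).PosSemidef)
    (h2 : (M + (2 * μ) • (1 : Matrix (Fin d) (Fin d) ℝ) - C).PosSemidef)
    (lammin : ℝ) (hmem : lammin ∈ spectrum ℝ M)
    (hmin : ∀ ν ∈ spectrum ℝ M, lammin ≤ ν) :
    ∀ t ∈ spectrum ℝ ((hC.posSemidef.sqrt)⁻¹ * M * (hC.posSemidef.sqrt)⁻¹),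
      lammin / (lammin + 2 * μ) ≤ t := by
  intro t ht
  -- lammin is positive
  have hlam : 0 < lammin := by
    rw [Matrix.IsHermitian.spectrum_real_eq_range_eigenvalues hM.1] at hmem
    obtain ⟨i, rfl⟩ := hmem
    exact hM.eigenvalues_pos i
  have hden : 0 < lammin + 2 * μ := by linarith
  set c : ℝ := lammin / (lammin + 2 * μ) with hc
  have hc0 : 0 ≤ c := le_of_lt (div_pos hlam hden)
  have hc1 : c ≤ 1 := by
    rw [hc, div_le_one hden]; linarith
  have h3 : (1 - c) * lammin = c * (2 * μ) := by
    rw [hc]; field_simp; ring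
  -- M - lammin • 1 is PSD
  have hN : (M - lammin • (1 : Matrix (Fin d) (Fin d) ℝ)).PosSemidef := by
    have hNH : (M - lammin • (1 : Matrix (Fin d) (Fin d) ℝ)).IsHermitian := by
      unfold Matrix.IsHermitian
      rw [conjTranspose_sub, conjTranspose_smul, hM.1.eq, conjTranspose_one]
      simp
    refine hNH.posSemidef_iff_eigenvalues_nonneg.mpr fun i => ?_
    have hmemN : hNH.eigenvalues i ∈ spectrum ℝ (M - lammin • (1 : Matrix (Fin d) (Fin d) ℝ)) :=
      hNH.eigenvalues_mem_spectrum_real i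
    have hspec : spectrum ℝ (M - lammin • (1 : Matrix (Fin d) (Fin d) ℝ))
        = spectrum ℝ M - ({lammin} : Set ℝ) := by
      rw [spectrum.sub_singleton_eq, Algebra.algebraMap_eq_smul_one]
    rw [hspec] at hmemN
    obtain ⟨a, ha, b, hb, hab⟩ := hmemN
    rw [Set.mem_singleton_iff] at hb
    subst hb
    simp only at hab
    rw [← hab]
    have := hmin a ha
    exact sub_nonneg.mpr this
  -- M - c • C is PSD
  have hK : (M - c • C).PosSemidef := by
    have key : M - c • C = (1 - c) • (M - lammin • (1 : Matrix (Fin d) (Fin d) ℝ))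
        + c • (M + (2 * μ) • (1 : Matrix (Fin d) (Fin d) ℝ) - C) := by
      rw [smul_sub, smul_sub, smul_add, smul_smul, smul_smul, h3, sub_smul, one_smul]
      abel
    rw [key]
    exact (aux_smul_psd hN (by linarith)).add (aux_smul_psd h2 hc0)
  -- sqrt facts
  set S := hC.posSemidef.sqrt with hS
  have hSps : S.PosSemidef := aux_sqrt_psd hC.posSemidef
  have hSH : S.IsHermitian := hSps.isHermitian
  have hSS : S * S = C := aux_sqrt_mul_self hC.posSemidef
  have hdet : IsUnit S.det := by
    have h4 : S.det * S.det = C.det := by rw [← det_mul, hSS]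
    have h5 : C.det ≠ 0 := ne_of_gt hC.det_pos
    refine isUnit_iff_ne_zero.mpr fun h0 => h5 ?_
    rw [← h4, h0, mul_zero]
  have hSinvH : S⁻¹.IsHermitian := hSH.inv
  have hSCS : S⁻¹ * C * S⁻¹ = 1 := by
    rw [← hSS, ← Matrix.mul_assoc S⁻¹ S S, nonsing_inv_mul S hdet, Matrix.one_mul,
      mul_nonsing_inv S hdet]
  -- the shifted matrix is PSD
  have hB : (S⁻¹ * M * S⁻¹ - c • (1 : Matrix (Fin d) (Fin d) ℝ)).PosSemidef := by
    have heq : S⁻¹ * M * S⁻¹ - c • (1 : Matrix (Fin d) (Fin d) ℝ)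
        = S⁻¹ * (M - c • C) * S⁻¹ᴴ := by
      rw [hSinvH.eq, Matrix.mul_sub, Matrix.sub_mul, Matrix.mul_smul, Matrix.smul_mul, hSCS]
    rw [heq]
    exact hK.mul_mul_conjTranspose_same S⁻¹
  -- conclude
  have htc : t - c ∈ spectrum ℝ (S⁻¹ * M * S⁻¹ - c • (1 : Matrix (Fin d) (Fin d) ℝ)) := by
    rw [← Algebra.algebraMap_eq_smul_one, ← spectrum.sub_singleton_eq]
    exact Set.sub_mem_sub ht rfl
  have := aux_spectrum_nonneg hB _ htc
  linarith
end

section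
/- Let X be the 2×2 diagonal matrix diag(1+δ, 1) with δ > 0 and let X̂ = [[1+δ, y],[y, z]] with |y| ≤ cδ and |1 − z| ≤ cδ for a sufficiently small universal constant c > 0 (c = 1/8 suffices). Then the unit leading eigenvector v̂ of X̂ whose first coordinate is positive satisfies |v̂₂ − y/δ| ≤ C(y² + (1−z)²)/δ² for a universal constant C. -/
set_option maxHeartbeats 800000


open Matrix

/-- For `X̂ = [[1+δ, y],[y, z]]` with `|y| ≤ δ/8` and `|1-z| ≤ δ/8`, the unit
leading eigenvector `v` of `X̂` with positive first coordinate satisfies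
`|v₂ - y/δ| ≤ C (y² + (1-z)²)/δ²` for a universal constant `C > 0`. -/
theorem stmt19 :
    ∃ C : ℝ, 0 < C ∧
      ∀ (δ y z : ℝ), 0 < δ → |y| ≤ δ / 8 → |1 - z| ≤ δ / 8 →
        ∀ (lam : ℝ) (v : Fin 2 → ℝ),
          (∑ i, (v i) ^ 2 = 1) →
          (!![1 + δ, y; y, z] : Matrix (Fin 2) (Fin 2) ℝ).mulVec v = lam • v →
          (∀ μ ∈ spectrum ℝ (!![1 + δ, y; y, z] : Matrix (Fin 2) (Fin 2) ℝ), μ ≤ lam) →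
          0 < v 0 →
          |v 1 - y / δ| ≤ C * (y ^ 2 + (1 - z) ^ 2) / δ ^ 2 := by
  refine ⟨4, by norm_num, ?_⟩
  intro δ y z hδ hy hz lam v hnorm hveq hspec hv0
  -- component equations
  have e0 := congrFun hveq 0
  have e1 := congrFun hveq 1
  simp [Matrix.mulVec, dotProduct, Fin.sum_univ_two] at e0 e1
  have hnorm2 : v 0 ^ 2 + v 1 ^ 2 = 1 := by
    simpa [Fin.sum_univ_two] using hnorm
  have hz' := abs_le.mp hz
  have hy' := abs_le.mp hy
  -- characteristic relation
  have hchar : (1 + δ - lam) * (z - lam) = y ^ 2 := by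
    have key : ((1 + δ - lam) * (z - lam) - y ^ 2) * v 0 = 0 := by
      linear_combination (z - lam) * e0 - y * e1
    rcases mul_eq_zero.mp key with h | h
    · linarith [h]
    · exact absurd h (ne_of_gt hv0)
  -- the other eigenvalue is in the spectrum
  have hμmem : (1 + δ + z - lam) ∈ spectrum ℝ (!![1 + δ, y; y, z] : Matrix (Fin 2) (Fin 2) ℝ) := by
    rw [spectrum.mem_iff]
    intro h
    rw [Matrix.isUnit_iff_isUnit_det, isUnit_iff_ne_zero] at h
    apply h
    rw [Matrix.det_fin_two]
    simp [Matrix.algebraMap_matrix_apply]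
    nlinarith [hchar]
  have hμ : 1 + δ + z - lam ≤ lam := hspec _ hμmem
  -- lam - z is bounded below
  clear hveq hspec hμmem hnorm
  have hd : 7 * δ / 16 ≤ lam - z := by linarith
  have hd0 : 0 < lam - z := by linarith
  -- lam ≥ 1 + δ and upper bound
  have hchar' : (lam - (1 + δ)) * (lam - z) = y ^ 2 := by nlinarith [hchar]
  have hlamge : 1 + δ ≤ lam := by nlinarith [sq_nonneg y]
  have hlamup : 7 * ((lam - (1 + δ)) * δ) ≤ 16 * y ^ 2 := by
    nlinarith [mul_le_mul_of_nonneg_left hd (by linarith : (0:ℝ) ≤ lam - (1 + δ))]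
  -- v 0 bounds
  have hv0le1 : v 0 ≤ 1 := by nlinarith [sq_nonneg (v 1)]
  have h1mv0 : 1 - v 0 ≤ v 1 ^ 2 := by nlinarith
  -- v 1 formula
  have hv1 : (lam - z) * v 1 = y * v 0 := by linear_combination -e1
  -- v 1 squared bound : 49 δ² v1² ≤ 256 y²
  have hv1sq : 49 * δ ^ 2 * v 1 ^ 2 ≤ 256 * y ^ 2 := by
    have h1 : (lam - z) ^ 2 * v 1 ^ 2 = y ^ 2 * v 0 ^ 2 := by
      linear_combination ((lam - z) * v 1 + y * v 0) * hv1
    have hsq : (7 * δ / 16) ^ 2 ≤ (lam - z) ^ 2 :=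
      pow_le_pow_left₀ (by linarith) hd 2
    have hv0sq : v 0 ^ 2 ≤ 1 := by linarith [sq_nonneg (v 1)]
    have h2 : (lam - z) ^ 2 * v 1 ^ 2 ≤ y ^ 2 := by
      rw [h1]
      have := mul_le_mul_of_nonneg_left hv0sq (sq_nonneg y)
      linarith
    have h3 := mul_le_mul_of_nonneg_right hsq (sq_nonneg (v 1))
    have h4 : (7 * δ / 16) ^ 2 * v 1 ^ 2 = 49 / 256 * (δ ^ 2 * v 1 ^ 2) := by ring
    linarith
  -- key identity
  have key : (v 1 - y / δ) * ((lam - z) * δ) = y * (δ * v 0 - (lam - z)) := by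
    field_simp
    linear_combination δ * hv1
  have hpos : 0 < (lam - z) * δ := mul_pos hd0 hδ
  have habs : |v 1 - y / δ| * ((lam - z) * δ) = |y| * |δ * v 0 - (lam - z)| := by
    rw [← abs_of_pos hpos, ← abs_mul, key, abs_mul]
  -- bound on |δ v0 - (lam - z)|
  have hB : |δ * v 0 - (lam - z)| ≤ (lam - (1 + δ)) + |1 - z| + δ * (1 - v 0) := by
    have hδv0 : 0 ≤ δ * (1 - v 0) := mul_nonneg hδ.le (by linarith)
    rw [abs_le]
    constructor <;> [linarith [le_abs_self (1 - z), neg_abs_le (1 - z), hδv0]; linarith [le_abs_self (1 - z), neg_abs_le (1 - z), hδv0]]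
  -- |y| * bound ≤ 3/2 (y² + (1-z)²)
  have t1 : |y| * (lam - (1 + δ)) ≤ 2 / 7 * y ^ 2 := by
    nlinarith [mul_le_mul_of_nonneg_right hy (by linarith : (0:ℝ) ≤ lam - (1 + δ))]
  have t2 : |y| * |1 - z| ≤ (y ^ 2 + (1 - z) ^ 2) / 2 := by
    nlinarith [sq_nonneg (|y| - |1 - z|), sq_abs y, sq_abs (1 - z)]
  have t3 : |y| * (δ * (1 - v 0)) ≤ 32 / 49 * y ^ 2 := by
    have h1 : |y| * (δ * (1 - v 0)) ≤ (δ / 8) * (δ * v 1 ^ 2) := by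
      have h2 : 0 ≤ δ * (1 - v 0) := by nlinarith
      nlinarith [mul_le_mul_of_nonneg_right hy h2,
        mul_le_mul_of_nonneg_left h1mv0 (le_of_lt hδ)]
    nlinarith [hv1sq]
  have hyB : |y| * |δ * v 0 - (lam - z)| ≤ 3 / 2 * (y ^ 2 + (1 - z) ^ 2) := by
    have := mul_le_mul_of_nonneg_left hB (abs_nonneg y)
    nlinarith [t1, t2, t3]
  -- conclude
  have hfin : |v 1 - y / δ| * δ ^ 2 ≤ 4 * (y ^ 2 + (1 - z) ^ 2) := by
    have h1 : |v 1 - y / δ| * (7 * δ / 16 * δ) ≤ |v 1 - y / δ| * ((lam - z) * δ) := by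
      apply mul_le_mul_of_nonneg_left _ (abs_nonneg _)
      exact mul_le_mul_of_nonneg_right hd (le_of_lt hδ)
    nlinarith [habs, hyB, abs_nonneg (v 1 - y / δ), sq_nonneg y, sq_nonneg (1 - z)]
  rw [le_div_iff₀ (by positivity : (0:ℝ) < δ ^ 2)]
  linarith [hfin]
end
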